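/- For 0 < s < 1, the restriction V̄₀ of V₀ to the singular fibre y = 0 (with u = εs) satisfies the exact formula 4πε V̄₀ = 2(1−s²)^{−1} + 1/s − 2 log ε + G + 2g(s), where G = −2 log 2 + 2γ − 2 and g(s) = Σ_{n≥1} (ζ(2n+1) − 1) s^{2n}, which has radius of convergence at least 2. -/

import Mathlib

open Real Filter

/-- The power series `g(s) = Σ_{n≥1} (ζ(2n+1) - 1) s^{2n}`. -/
noncomputable def ovg (s : ℝ) : ℝ :=
  ∑' n : ℕ, ((riemannZeta (2 * (n : ℂ) + 3)).re - 1) * s ^ (2 * n + 2)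

private lemma summable_pow_shift (p : ℕ) (hp : 1 < p) (c : ℕ) :
    Summable (fun m : ℕ => 1 / ((m : ℝ) + (c : ℝ)) ^ p) := by
  have := (summable_nat_add_iff c).mpr (Real.summable_one_div_nat_pow.mpr hp)
  refine this.congr fun n => ?_
  push_cast
  ring_nf

private lemma summable_shift1 (p : ℕ) (hp : 1 < p) :
    Summable (fun m : ℕ => 1 / ((m : ℝ) + 1) ^ p) :=
  (summable_pow_shift p hp 1).congr fun m => by norm_num

private lemma summable_shift2 (p : ℕ) (hp : 1 < p) :
    Summable (fun m : ℕ => 1 / ((m : ℝ) + 2) ^ p) :=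
  (summable_pow_shift p hp 2).congr fun m => by norm_num

private lemma zeta_re_eq (k : ℕ) :
    (riemannZeta (2 * (k : ℂ) + 3)).re = ∑' m : ℕ, 1 / ((m : ℝ) + 1) ^ (2 * k + 3) := by
  have h3 : (2 * (k : ℂ) + 3) = ((2 * k + 3 : ℕ) : ℂ) := by push_cast; ring
  have hre : (1 : ℝ) < (((2 * k + 3 : ℕ) : ℂ)).re := by
    simp only [Complex.natCast_re]
    exact_mod_cast by omega
  rw [h3, zeta_eq_tsum_one_div_nat_add_one_cpow hre]
  have h : ∀ n : ℕ, 1 / ((n : ℂ) + 1) ^ (((2 * k + 3 : ℕ)) : ℂ)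
      = ((1 / ((n : ℝ) + 1) ^ (2 * k + 3) : ℝ) : ℂ) := by
    intro n
    rw [Complex.cpow_natCast]
    push_cast
    ring
  rw [tsum_congr h, ← Complex.ofReal_tsum, Complex.ofReal_re]

private lemma zeta_re_sub_one (k : ℕ) :
    (riemannZeta (2 * (k : ℂ) + 3)).re - 1 = ∑' m : ℕ, 1 / ((m : ℝ) + 2) ^ (2 * k + 3) := by
  rw [zeta_re_eq]
  have hs : Summable (fun m : ℕ => 1 / ((m : ℝ) + 1) ^ (2 * k + 3)) :=
    summable_shift1 _ (by omega)
  have h0 := Summable.tsum_eq_zero_add hs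
  rw [h0]
  have : ∀ m : ℕ, 1 / (((m + 1 : ℕ) : ℝ) + 1) ^ (2 * k + 3)
      = 1 / ((m : ℝ) + 2) ^ (2 * k + 3) := by
    intro m; push_cast; ring_nf
  rw [tsum_congr this]
  norm_num

private lemma zeta_re_sub_one_nonneg (k : ℕ) :
    0 ≤ (riemannZeta (2 * (k : ℂ) + 3)).re - 1 := by
  rw [zeta_re_sub_one]
  exact tsum_nonneg fun m => by positivity

/-- The constant `∑ 1/(m+2)^2`. -/
noncomputable def Czet : ℝ := ∑' m : ℕ, 1 / ((m : ℝ) + 2) ^ 2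

private lemma Czet_nonneg : 0 ≤ Czet := tsum_nonneg fun m => by positivity

private lemma zeta_re_sub_one_le (k : ℕ) :
    (riemannZeta (2 * (k : ℂ) + 3)).re - 1 ≤ Czet * (1 / 4) ^ k := by
  rw [zeta_re_sub_one]
  have h1 : ∀ m : ℕ, 1 / ((m : ℝ) + 2) ^ (2 * k + 3)
      ≤ (1 / 4) ^ k * (1 / ((m : ℝ) + 2) ^ 2) := by
    intro m
    have h2 : (2 : ℝ) ≤ (m : ℝ) + 2 := by
      have := Nat.cast_nonneg (α := ℝ) m; linarith
    have key : (4 : ℝ) ^ k * ((m : ℝ) + 2) ^ 2 ≤ ((m : ℝ) + 2) ^ (2 * k + 3) := by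
      have hp : (2 : ℝ) ^ (2 * k + 1) ≤ ((m : ℝ) + 2) ^ (2 * k + 1) :=
        pow_le_pow_left₀ (by norm_num) h2 _
      have h4 : (4 : ℝ) ^ k ≤ (2 : ℝ) ^ (2 * k + 1) := by
        have e : (4 : ℝ) ^ k = 2 ^ (2 * k) := by rw [pow_mul]; norm_num
        rw [e]
        exact pow_le_pow_right₀ one_le_two (by omega)
      calc (4 : ℝ) ^ k * ((m : ℝ) + 2) ^ 2
          ≤ ((m : ℝ) + 2) ^ (2 * k + 1) * ((m : ℝ) + 2) ^ 2 := by
            have := le_trans h4 hp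
            exact mul_le_mul_of_nonneg_right this (by positivity)
        _ = ((m : ℝ) + 2) ^ (2 * k + 3) := by rw [← pow_add]
      -- done
    calc 1 / ((m : ℝ) + 2) ^ (2 * k + 3) ≤ 1 / ((4 : ℝ) ^ k * ((m : ℝ) + 2) ^ 2) :=
        one_div_le_one_div_of_le (by positivity) key
      _ = (1 / 4) ^ k * (1 / ((m : ℝ) + 2) ^ 2) := by
        rw [div_pow, one_pow, div_mul_div_comm, one_mul]
  have hsL : Summable (fun m : ℕ => 1 / ((m : ℝ) + 2) ^ (2 * k + 3)) :=
    summable_shift2 _ (by omega)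
  have hsR : Summable (fun m : ℕ => (1 / 4 : ℝ) ^ k * (1 / ((m : ℝ) + 2) ^ 2)) :=
    (summable_shift2 2 (by omega)).mul_left _
  calc ∑' m : ℕ, 1 / ((m : ℝ) + 2) ^ (2 * k + 3)
      ≤ ∑' m : ℕ, (1 / 4 : ℝ) ^ k * (1 / ((m : ℝ) + 2) ^ 2) := Summable.tsum_le_tsum h1 hsL hsR
    _ = (1 / 4) ^ k * Czet := tsum_mul_left
    _ = Czet * (1 / 4) ^ k := mul_comm _ _

private lemma ovg_summable {t : ℝ} (ht : |t| < 2) :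
    Summable (fun n : ℕ => ((riemannZeta (2 * (n : ℂ) + 3)).re - 1) * t ^ (2 * n + 2)) := by
  have ht2 : t ^ 2 < 4 := by nlinarith [abs_nonneg t, le_abs_self t, neg_abs_le t]
  have hr0 : (0 : ℝ) ≤ t ^ 2 / 4 := by positivity
  have hr1 : t ^ 2 / 4 < 1 := by linarith
  refine Summable.of_nonneg_of_le (fun n => ?_) (fun n => ?_)
    (((summable_geometric_of_lt_one hr0 hr1).mul_left (Czet * t ^ 2)))
  · have : t ^ (2 * n + 2) = (t ^ 2) ^ (n + 1) := by rw [← pow_mul]; ring_nf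
    rw [this]
    exact mul_nonneg (zeta_re_sub_one_nonneg n) (by positivity)
  · have e1 : t ^ (2 * n + 2) = (t ^ 2) ^ (n + 1) := by rw [← pow_mul]; ring_nf
    have e2 : (0 : ℝ) ≤ (t ^ 2) ^ (n + 1) := by positivity
    calc ((riemannZeta (2 * (n : ℂ) + 3)).re - 1) * t ^ (2 * n + 2)
        ≤ Czet * (1 / 4) ^ n * (t ^ 2) ^ (n + 1) := by
          rw [e1]; exact mul_le_mul_of_nonneg_right (zeta_re_sub_one_le n) e2
      _ = Czet * t ^ 2 * (t ^ 2 / 4) ^ n := by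
          rw [div_pow, one_pow, div_pow]; ring



private noncomputable def bfun (s : ℝ) (m k : ℕ) : ℝ :=
  2 * s ^ (2 * k + 2) / ((m : ℝ) + 1) ^ (2 * k + 3)

private lemma row_hasSum (s : ℝ) (hs0 : 0 ≤ s) (hs1 : s < 1) (m : ℕ) :
    HasSum (bfun s m)
      (2 * s ^ 2 / (((m : ℝ) + 1) * (((m : ℝ) + 1) ^ 2 - s ^ 2))) := by
  set n : ℝ := (m : ℝ) + 1 with hn
  have hn1 : 1 ≤ n := by simp [hn]
  have hn0 : 0 < n := by linarith
  have hsn : s < n := lt_of_lt_of_le hs1 hn1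
  have hr1 : s ^ 2 / n ^ 2 < 1 := by
    rw [div_lt_one (by positivity)]; nlinarith
  have hne : n ^ 2 - s ^ 2 ≠ 0 := by nlinarith
  have hgeo := (hasSum_geometric_of_lt_one (by positivity) hr1).mul_left (2 * s ^ 2 / n ^ 3)
  have heq : (fun k : ℕ => 2 * s ^ 2 / n ^ 3 * (s ^ 2 / n ^ 2) ^ k) = bfun s m := by
    funext k
    show _ = 2 * s ^ (2 * k + 2) / n ^ (2 * k + 3)
    rw [div_pow, ← pow_mul, ← pow_mul, div_mul_div_comm, pow_add, pow_add, pow_mul, pow_mul]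
    ring
  have hv : 2 * s ^ 2 / n ^ 3 * (1 - s ^ 2 / n ^ 2)⁻¹
      = 2 * s ^ 2 / (n * (n ^ 2 - s ^ 2)) := by
    field_simp
  rw [heq, hv] at hgeo
  exact hgeo

private lemma rowsum_summable (s : ℝ) (hs0 : 0 ≤ s) (hs1 : s < 1) :
    Summable (fun m : ℕ => 2 * s ^ 2 / (((m : ℝ) + 1) * (((m : ℝ) + 1) ^ 2 - s ^ 2))) := by
  have h1 : (0 : ℝ) < 1 - s ^ 2 := by nlinarith
  refine Summable.of_nonneg_of_le (fun m => ?_) (fun m => ?_)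
    ((summable_shift1 3 (by omega)).mul_left (2 * s ^ 2 / (1 - s ^ 2)))
  · have hn1 : (1 : ℝ) ≤ (m : ℝ) + 1 := by simp
    have : (0:ℝ) < ((m : ℝ) + 1) ^ 2 - s ^ 2 := by nlinarith
    positivity
  · set n : ℝ := (m : ℝ) + 1 with hn
    have hn1 : (1 : ℝ) ≤ n := by simp [hn]
    have hpos : (0:ℝ) < n ^ 2 - s ^ 2 := by nlinarith
    have h3 : (0:ℝ) ≤ n ^ 3 - n := by nlinarith [sq_nonneg (n - 1)]
    have hkey : (1 - s ^ 2) * n ^ 3 ≤ n * (n ^ 2 - s ^ 2) := by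
      nlinarith [mul_nonneg (sq_nonneg s) h3]
    rw [mul_one_div, div_div]
    exact div_le_div_of_nonneg_left (by positivity) (by positivity) hkey

private lemma T_eq (s : ℝ) (hs0 : 0 < s) (hs1 : s < 1) :
    ∑' m : ℕ, 2 * s ^ 2 / (((m : ℝ) + 1) * (((m : ℝ) + 1) ^ 2 - s ^ 2))
      = 2 * (1 - s ^ 2)⁻¹ - 2 + 2 * ovg s := by
  have hrow : ∀ m, HasSum (bfun s m)
      (2 * s ^ 2 / (((m : ℝ) + 1) * (((m : ℝ) + 1) ^ 2 - s ^ 2))) :=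
    fun m => row_hasSum s hs0.le hs1 m
  have hcol : ∀ k, Summable (fun m => bfun s m k) := by
    intro k
    have := (summable_shift1 (2 * k + 3) (by omega)).mul_left (2 * s ^ (2 * k + 2))
    refine this.congr fun m => ?_
    rw [mul_one_div]
    rfl
  have hb_nonneg : ∀ p : ℕ × ℕ, 0 ≤ (fun p : ℕ × ℕ => bfun s p.1 p.2) p := by
    rintro ⟨m, k⟩
    show (0:ℝ) ≤ 2 * s ^ (2 * k + 2) / ((m : ℝ) + 1) ^ (2 * k + 3)
    positivity
  have huncurry : Summable (Function.uncurry (bfun s)) := by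
    refine (summable_prod_of_nonneg hb_nonneg).mpr ⟨fun m => (hrow m).summable, ?_⟩
    refine (rowsum_summable s hs0.le hs1).congr fun m => ?_
    exact ((hrow m).tsum_eq).symm
  have hswap : ∑' (m) (k), bfun s m k = ∑' (k) (m), bfun s m k :=
    (Summable.tsum_comm' (f := bfun s) huncurry (fun m => (hrow m).summable) hcol).symm
  have hL : ∑' m : ℕ, 2 * s ^ 2 / (((m : ℝ) + 1) * (((m : ℝ) + 1) ^ 2 - s ^ 2))
      = ∑' (m) (k), bfun s m k :=
    tsum_congr fun m => ((hrow m).tsum_eq).symm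
  have hcolval : ∀ k : ℕ, ∑' m, bfun s m k
      = 2 * (((riemannZeta (2 * (k : ℂ) + 3)).re - 1) * s ^ (2 * k + 2))
        + 2 * s ^ (2 * k + 2) := by
    intro k
    have h1 : ∑' m : ℕ, bfun s m k
        = 2 * s ^ (2 * k + 2) * ∑' m : ℕ, 1 / ((m : ℝ) + 1) ^ (2 * k + 3) := by
      rw [← tsum_mul_left]
      refine tsum_congr fun m => ?_
      rw [mul_one_div]
      rfl
    rw [h1, ← zeta_re_eq k]
    ring
  have hgeo2 : HasSum (fun k : ℕ => 2 * s ^ (2 * k + 2)) (2 * (s ^ 2 * (1 - s ^ 2)⁻¹)) := by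
    have hr1 : s ^ 2 < 1 := by nlinarith
    have := ((hasSum_geometric_of_lt_one (by positivity) hr1).mul_left (s ^ 2)).mul_left 2
    refine this.congr_fun fun k => ?_
    rw [← pow_mul, ← pow_add]
    ring_nf
  have hsummand : Summable (fun k : ℕ =>
      2 * (((riemannZeta (2 * (k : ℂ) + 3)).re - 1) * s ^ (2 * k + 2))) :=
    (ovg_summable (by rw [abs_of_pos hs0]; linarith)).mul_left 2
  rw [hL, hswap, tsum_congr hcolval, Summable.tsum_add hsummand hgeo2.summable,
    tsum_mul_left, hgeo2.tsum_eq]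
  have h2 : (0:ℝ) < 1 - s ^ 2 := by nlinarith
  have h3 : 2 * (s ^ 2 * (1 - s ^ 2)⁻¹) = 2 * (1 - s ^ 2)⁻¹ - 2 := by
    field_simp
    ring
  rw [h3]
  unfold ovg
  ring

/-- On the singular fibre `y = 0`, writing `u = εs` with `0 < s < 1`,
the Ooguri–Vafa function satisfies the exact formula
`4πε V̄₀ = 2(1-s²)⁻¹ + 1/s - 2 log ε + G + 2 g(s)` with `G = -2 log 2 + 2γ - 2`,
where `g(s) = Σ_{n≥1} (ζ(2n+1)-1)s^{2n}` has radius of convergence at least 2. -/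
theorem statement5 (ε : ℝ) (hε : 0 < ε)
    (a : ℤ → ℝ)
    (ha0 : a 0 = 2 * (-Real.eulerMascheroniConstant + Real.log (2 * ε)) / ε)
    (ha : ∀ n : ℤ, n ≠ 0 → a n = 1 / ((|n| : ℝ) * ε))
    (V₀ : ℝ → ℂ → ℝ)
    (hV : ∀ (u : ℝ) (y : ℂ),
      ¬ (y = 0 ∧ ∃ n : ℤ, u = (n : ℝ) * ε) → ‖y‖ < 1 →
      Tendsto (fun j : ℕ => (1 / (4 * π)) * ∑ n ∈ Finset.Icc (-(j : ℤ)) (j : ℤ),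
          (1 / Real.sqrt ((u + (n : ℝ) * ε) ^ 2 + ‖y‖ ^ 2) - a |n|))
        atTop (nhds (V₀ u y)))
    (s : ℝ) (hs0 : 0 < s) (hs1 : s < 1) :
    4 * π * ε * V₀ (ε * s) 0
      = 2 * (1 - s ^ 2)⁻¹ + 1 / s - 2 * Real.log ε
        + (-2 * Real.log 2 + 2 * Real.eulerMascheroniConstant - 2) + 2 * ovg s ∧
      ∀ t : ℝ, |t| < 2 →
        Summable (fun n : ℕ => ((riemannZeta (2 * (n : ℂ) + 3)).re - 1) * t ^ (2 * n + 2)) := by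
  refine ⟨?_, fun t ht => ovg_summable ht⟩
  set f : ℤ → ℝ := fun n : ℤ =>
    1 / Real.sqrt ((ε * s + (n : ℝ) * ε) ^ 2 + ‖(0 : ℂ)‖ ^ 2) - a |n| with hf
  -- decomposition of symmetric sums
  have key : ∀ j : ℕ, ∑ n ∈ Finset.Icc (-(j : ℤ)) (j : ℤ), f n
      = f 0 + ∑ i ∈ Finset.range j, (f ((i : ℤ) + 1) + f (-((i : ℤ) + 1))) := by
    intro j
    induction j with
    | zero => simp
    | succ j ih =>
      have hins : Finset.Icc (-((j : ℤ) + 1)) ((j : ℤ) + 1)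
          = insert (-((j : ℤ) + 1)) (insert ((j : ℤ) + 1)
              (Finset.Icc (-(j : ℤ)) (j : ℤ))) := by
        ext x
        simp only [Finset.mem_Icc, Finset.mem_insert]
        omega
      have h1 : (-((j : ℤ) + 1)) ∉ insert ((j : ℤ) + 1) (Finset.Icc (-(j : ℤ)) (j : ℤ)) := by
        simp only [Finset.mem_insert, Finset.mem_Icc]
        omega
      have h2 : ((j : ℤ) + 1) ∉ Finset.Icc (-(j : ℤ)) (j : ℤ) := by
        simp only [Finset.mem_Icc]
        omega
      push_cast
      rw [hins, Finset.sum_insert h1, Finset.sum_insert h2, ih, Finset.sum_range_succ]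
      push_cast
      ring
  have sqrt_eq : ∀ x y : ℝ, 0 ≤ y → x ^ 2 = y ^ 2 →
      Real.sqrt (x ^ 2 + ‖(0 : ℂ)‖ ^ 2) = y := by
    intro x y hy hxy
    rw [norm_zero]
    rw [show x ^ 2 + (0 : ℝ) ^ 2 = y ^ 2 by rw [hxy]; ring]
    exact Real.sqrt_sq hy
  -- value of f 0
  have hf0 : f 0 = 1 / (ε * s) - a 0 := by
    have hsq : Real.sqrt ((ε * s + ((0 : ℤ) : ℝ) * ε) ^ 2 + ‖(0 : ℂ)‖ ^ 2) = ε * s :=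
      sqrt_eq _ _ (by positivity) (by push_cast; ring)
    simp only [hf, hsq]
    norm_num
  -- value of pairs
  have hpair : ∀ i : ℕ, f ((i : ℤ) + 1) + f (-((i : ℤ) + 1))
      = (1 / ε) * (2 * s ^ 2 / (((i : ℝ) + 1) * (((i : ℝ) + 1) ^ 2 - s ^ 2))) := by
    intro i
    have hι : (1 : ℝ) ≤ (i : ℝ) + 1 := by simp
    have hs' : s < (i : ℝ) + 1 := by linarith
    have e1 : Real.sqrt ((ε * s + (((i : ℤ) + 1 : ℤ) : ℝ) * ε) ^ 2 + ‖(0 : ℂ)‖ ^ 2)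
        = ε * (s + ((i : ℝ) + 1)) :=
      sqrt_eq _ _ (by positivity) (by push_cast; ring)
    have e2 : Real.sqrt ((ε * s + ((-((i : ℤ) + 1) : ℤ) : ℝ) * ε) ^ 2 + ‖(0 : ℂ)‖ ^ 2)
        = ε * (((i : ℝ) + 1) - s) :=
      sqrt_eq _ _ (by nlinarith) (by push_cast; ring)
    have habs : |(i : ℤ) + 1| = (i : ℤ) + 1 := abs_of_nonneg (by omega)
    have habs2 : |(-((i : ℤ) + 1))| = (i : ℤ) + 1 := by rw [abs_neg]; exact habs
    have ha1 : a |(i : ℤ) + 1| = 1 / (((i : ℝ) + 1) * ε) := by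
      rw [habs, ha _ (by omega)]
      push_cast
      rw [abs_of_nonneg (show (0:ℝ) ≤ (i : ℝ) + 1 by positivity)]
    have ha2 : a |(-((i : ℤ) + 1))| = 1 / (((i : ℝ) + 1) * ε) := by
      rw [habs2, ha _ (by omega)]
      push_cast
      rw [abs_of_nonneg (show (0:ℝ) ≤ (i : ℝ) + 1 by positivity)]
    simp only [hf, e1, e2, ha1, ha2]
    have d1 : ε * (s + ((i : ℝ) + 1)) ≠ 0 := by positivity
    have d2 : ε * (((i : ℝ) + 1) - s) ≠ 0 := by
      have : (0:ℝ) < ((i : ℝ) + 1) - s := by linarith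
      positivity
    have d3 : ((i : ℝ) + 1) * ε ≠ 0 := by positivity
    have d4 : ((i : ℝ) + 1) ^ 2 - s ^ 2 ≠ 0 := by nlinarith
    have d5 : ((i : ℝ) + 1) - s ≠ 0 := ne_of_gt (by linarith)
    have d6 : s + ((i : ℝ) + 1) ≠ 0 := ne_of_gt (by linarith)
    field_simp
    ring
  -- the series
  have hsum := rowsum_summable s hs0.le hs1
  set T : ℝ := ∑' m : ℕ, 2 * s ^ 2 / (((m : ℝ) + 1) * (((m : ℝ) + 1) ^ 2 - s ^ 2)) with hT
  have htend : Tendsto (fun j : ℕ => ∑ i ∈ Finset.range j,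
      (f ((i : ℤ) + 1) + f (-((i : ℤ) + 1)))) atTop (nhds ((1 / ε) * T)) := by
    have h := (hsum.hasSum.mul_left (1 / ε)).tendsto_sum_nat
    refine h.congr fun j => Finset.sum_congr rfl fun i _ => (hpair i).symm
  have htend2 : Tendsto (fun j : ℕ => (1 / (4 * π)) * ∑ n ∈ Finset.Icc (-(j : ℤ)) (j : ℤ), f n)
      atTop (nhds ((1 / (4 * π)) * (f 0 + (1 / ε) * T))) := by
    have := (tendsto_const_nhds (x := f 0) (f := atTop (α := ℕ))).add htend
    have h2 := this.const_mul (1 / (4 * π))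
    refine h2.congr fun j => ?_
    rw [key j]
  have hcond : ¬ ((0 : ℂ) = 0 ∧ ∃ n : ℤ, ε * s = (n : ℝ) * ε) := by
    rintro ⟨-, n, hn⟩
    have hsn : s = (n : ℝ) :=
      mul_left_cancel₀ hε.ne' (hn.trans (mul_comm (n : ℝ) ε))
    have h0 : (0 : ℝ) < (n : ℝ) := hsn ▸ hs0
    have h1 : (1 : ℤ) ≤ n := by exact_mod_cast h0
    have : (1 : ℝ) ≤ (n : ℝ) := by exact_mod_cast h1
    linarith [hsn ▸ this]
  have hV' := hV (ε * s) 0 hcond (by norm_num)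
  have hVeq : V₀ (ε * s) 0 = (1 / (4 * π)) * (f 0 + (1 / ε) * T) :=
    tendsto_nhds_unique hV' htend2
  have hπ : (π : ℝ) ≠ 0 := Real.pi_ne_zero
  have hmain : 4 * π * ε * V₀ (ε * s) 0 = ε * f 0 + T := by
    rw [hVeq]
    field_simp
  have hεf0 : ε * f 0 = 1 / s + 2 * Real.eulerMascheroniConstant
      - 2 * Real.log 2 - 2 * Real.log ε := by
    rw [hf0, ha0, Real.log_mul two_ne_zero hε.ne']
    field_simp
    ring
  rw [hmain, hεf0, hT, T_eq s hs0 hs1]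
  ring
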